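/- arXiv:1411.8000 — 2 statements merged into one kernel-verified Lean document; each statement's English description precedes it below -/
import Mathlib

section
/- Let f:[0,T]→ℝ be a continuous function, extended to ℝ by f(s):=f(0) for s<0 and f(s):=f(T) for s>T. Assume f has a (deterministic) quadratic variation: there is a continuous nondecreasing function [f]:[0,T]→ℝ with [f](0)=0 such that for every x∈[0,T], (1/ε)∫_0^x (f(s+ε)−f(s))^2 ds → [f](x) as ε→0⁺. Let F∈C^{1,2}([0,T]×ℝ;ℝ). Then for every t∈[0,T] the limit lim_{ε→0⁺} ∫_0^t ∂_x F(s,f(s)) (f(s+ε)−f(s))/ε ds exists and equals F(t,f(t)) − F(0,f(0)) − ∫_0^t ∂_t F(s,f(s)) ds − (1/2)∫_0^t ∂^2_{xx}F(s,f(s)) d[f](s), where the last integral is the Lebesgue–Stieltjes integral with respect to the continuous nondecreasing function [f]. -/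
open MeasureTheory Filter Topology Set

private lemma abs_sub_le_of_mem_uIcc {a b y : ℝ} (hy : y ∈ Set.uIcc a b) : |y - a| ≤ |b - a| := by
  rw [Set.mem_uIcc] at hy
  rcases hy with ⟨h1, h2⟩ | ⟨h1, h2⟩ <;>
    [ (have hb : b - a ≤ |b - a| := le_abs_self _);
      (have hb : a - b ≤ |b - a| := neg_le_abs _ |>.trans' (by linarith [neg_abs_le (b-a)]) ) ] <;>
    · rw [abs_le]; constructor <;> nlinarith [abs_nonneg (b - a)]

private lemma tendsto_of_forall_delta (X : ℝ → ℝ) (L C : ℝ)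
    (h : ∀ δ : ℝ, 0 < δ → ∀ᶠ ε in 𝓝[>] (0:ℝ), |X ε - L| ≤ C * δ) :
    Tendsto X (𝓝[>] (0:ℝ)) (𝓝 L) := by
  rw [Metric.tendsto_nhds]
  intro η hη
  have hC : (0:ℝ) < |C| + 1 := by positivity
  filter_upwards [h (η / (|C| + 1)) (by positivity)] with ε hε
  rw [Real.dist_eq]
  calc |X ε - L| ≤ C * (η / (|C| + 1)) := hε
    _ ≤ |C| * (η / (|C| + 1)) := mul_le_mul_of_nonneg_right (le_abs_self C) (by positivity)
    _ < η := by
        rw [mul_div_assoc'] ; rw [div_lt_iff₀ hC]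
        nlinarith [abs_nonneg C]

private lemma tendsto_avg (g : ℝ → ℝ) (hg : Continuous g) (t : ℝ) :
    Tendsto (fun ε : ℝ => (1/ε) * ∫ u in t..(t+ε), g u) (𝓝[>] (0:ℝ)) (𝓝 (g t)) := by
  apply tendsto_of_forall_delta _ _ 1
  intro δ hδ
  obtain ⟨η, hη, hcont⟩ := Metric.continuousAt_iff.mp hg.continuousAt δ hδ
  filter_upwards [Ioo_mem_nhdsGT hη] with ε hε
  obtain ⟨hε0, hεη⟩ := hε
  have hconst : (∫ u in t..(t+ε), (g t : ℝ)) = ε * g t := by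
    simp [mul_comm]
  have hint : (1/ε) * ∫ u in t..(t+ε), g u - g t
      = (1/ε) * (∫ u in t..(t+ε), g u) - g t := by
    rw [intervalIntegral.integral_sub (hg.intervalIntegrable _ _)
      (intervalIntegrable_const), hconst]
    field_simp
  have hbd : |∫ u in t..(t+ε), (g u - g t)| ≤ δ * |t + ε - t| := by
    rw [← Real.norm_eq_abs]
    apply intervalIntegral.norm_integral_le_of_norm_le_const
    intro u hu
    rw [Set.uIoc_of_le (by linarith)] at hu
    have : dist u t < η := by
      rw [Real.dist_eq, abs_of_nonneg (by linarith [hu.1.le] : 0 ≤ u - t)]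
      linarith [hu.2]
    exact (hcont this).le
  rw [← hint]
  have he : t + ε - t = ε := by ring
  rw [he, abs_of_pos hε0] at hbd
  calc |(1/ε) * ∫ u in t..(t+ε), (g u - g t)| = (1/ε) * |∫ u in t..(t+ε), (g u - g t)| := by
        rw [abs_mul, abs_of_pos (by positivity)]
    _ ≤ (1/ε) * (δ * ε) := by
        apply mul_le_mul_of_nonneg_left hbd (by positivity)
    _ = 1 * δ := by field_simp

private lemma tendsto_P0 (g : ℝ → ℝ) (hg : Continuous g) (t : ℝ) :
    Tendsto (fun ε : ℝ => (1/ε) * ∫ s in (0:ℝ)..t, (g (s+ε) - g s)) (𝓝[>] (0:ℝ))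
      (𝓝 (g t - g 0)) := by
  have key : ∀ ε : ℝ, (∫ s in (0:ℝ)..t, (g (s+ε) - g s))
      = (∫ u in t..(t+ε), g u) - ∫ u in (0:ℝ)..(0+ε), g u := by
    intro ε
    have h1 : (∫ s in (0:ℝ)..t, g (s+ε)) = ∫ u in (0+ε)..(t+ε), g u :=
      intervalIntegral.integral_comp_add_right g ε
    have hcomp : Continuous (fun s : ℝ => g (s+ε)) := hg.comp (continuous_add_right ε)
    rw [intervalIntegral.integral_sub (f := fun s => g (s+ε))
      (hcomp.intervalIntegrable _ _) (hg.intervalIntegrable _ _), h1]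
    have I : ∀ a b : ℝ, IntervalIntegrable g volume a b := fun a b => hg.intervalIntegrable a b
    have h2 := intervalIntegral.integral_add_adjacent_intervals (I 0 t) (I t (t+ε))
    have h3 := intervalIntegral.integral_add_adjacent_intervals (I 0 (0+ε)) (I (0+ε) (t+ε))
    linarith [h2, h3]
  simp only [key]
  have := (tendsto_avg g hg t).sub (tendsto_avg g hg 0)
  simpa [mul_sub] using this

private lemma tendsto_qv_integral
    (T : ℝ) (f : ℝ → ℝ) (hf : Continuous f)
    (qv : ℝ → ℝ) (hqv_mono : MonotoneOn qv (Set.Icc 0 T)) (hqv_zero : qv 0 = 0)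
    (hqv_lim : ∀ x ∈ Set.Icc (0:ℝ) T,
      Tendsto (fun ε : ℝ => (1/ε) * ∫ s in (0:ℝ)..x, (f (s+ε) - f s)^2) (𝓝[>] (0:ℝ)) (𝓝 (qv x)))
    (μ : Measure ℝ)
    (hμ : ∀ u v : ℝ, 0 ≤ u → u ≤ v → v ≤ T → μ (Set.Ioc u v) = ENNReal.ofReal (qv v - qv u))
    (t : ℝ) (ht0 : 0 < t) (htT : t ≤ T)
    (φ : ℝ → ℝ) (hφ : Continuous φ) :
    Tendsto (fun ε : ℝ => ∫ s in (0:ℝ)..t, φ s * ((f (s+ε) - f s)^2 / ε)) (𝓝[>] (0:ℝ))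
      (𝓝 (∫ s in Set.Ioc (0:ℝ) t, φ s ∂μ)) := by
  have hT0 : (0:ℝ) ≤ T := ht0.le.trans htT
  have hqvt : 0 ≤ qv t := by
    have := hqv_mono ⟨le_refl 0, hT0⟩ ⟨ht0.le, htT⟩ ht0.le
    linarith [hqv_zero]
  -- interval integrability of φ wrt μ
  obtain ⟨Mφ, hMφ⟩ := isCompact_Icc.exists_bound_of_continuousOn
    (hφ.continuousOn : ContinuousOn φ (Icc (0:ℝ) T))
  have hφint : ∀ u v : ℝ, 0 ≤ u → u ≤ v → v ≤ T → IntervalIntegrable φ μ u v := by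
    intro u v h0 huv hvT
    rw [intervalIntegrable_iff, uIoc_of_le huv]
    apply Measure.integrableOn_of_bounded (M := Mφ)
    · rw [hμ u v h0 huv hvT]; exact ENNReal.ofReal_ne_top
    · exact hφ.aestronglyMeasurable
    · exact ae_restrict_of_forall_mem measurableSet_Ioc
        (fun s hs => hMφ s ⟨h0.trans hs.1.le, hs.2.trans hvT⟩)
  -- continuity of the weight
  have hw : ∀ ε : ℝ, Continuous (fun s => (f (s+ε) - f s)^2 / ε) := fun ε =>
    (((hf.comp (continuous_add_right ε)).sub hf).pow 2).div_const ε
  have hwint : ∀ (ε a b : ℝ), IntervalIntegrable (fun s => (f (s+ε) - f s)^2 / ε) volume a b :=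
    fun ε a b => (hw ε).intervalIntegrable a b
  have hwnn : ∀ ε : ℝ, 0 < ε → ∀ s : ℝ, 0 ≤ (f (s+ε) - f s)^2 / ε :=
    fun ε hε s => div_nonneg (sq_nonneg _) hε.le
  set V : ℝ → ℝ → ℝ := fun x ε => ∫ s in (0:ℝ)..x, (f (s+ε) - f s)^2 / ε with hVdef
  have hV : ∀ x ∈ Icc (0:ℝ) T, Tendsto (fun ε => V x ε) (𝓝[>] (0:ℝ)) (𝓝 (qv x)) := by
    intro x hx
    apply (hqv_lim x hx).congr
    intro ε
    rw [hVdef]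
    simp only [intervalIntegral.integral_div]
    ring
  apply tendsto_of_forall_delta _ _ (2 * qv t + 2)
  intro δ hδ
  -- partition
  obtain ⟨η, hη, hucφ⟩ := Metric.uniformContinuousOn_iff.mp
    (isCompact_Icc.uniformContinuousOn_of_continuous
      (hφ.continuousOn : ContinuousOn φ (Icc (0:ℝ) t))) δ hδ
  obtain ⟨n, hn⟩ := exists_nat_gt (t / η)
  have hn0 : 0 < (n:ℝ) := lt_trans (by positivity) hn
  set c := t / n with hcdef
  have hc : 0 < c := div_pos ht0 hn0
  have hcη : c < η := by
    rw [hcdef, div_lt_iff₀ hn0]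
    have := (div_lt_iff₀ hη).mp hn
    linarith
  set x : ℕ → ℝ := fun i => i * c with hxdef
  have hx0 : x 0 = 0 := by simp [hxdef]
  have hxn : x n = t := by
    show (n:ℝ) * c = t; rw [hcdef]; field_simp [hn0.ne']
  have hxmono : ∀ i : ℕ, x i ≤ x (i+1) := by
    intro i
    show (i:ℝ) * c ≤ ((i:ℕ)+1 : ℕ) * c
    push_cast
    nlinarith [hc.le]
  have hxmem : ∀ i ≤ n, x i ∈ Icc (0:ℝ) t := by
    intro i hi
    constructor
    · positivity
    · rw [← hxn]
      have h : (i:ℝ) ≤ (n:ℝ) := by exact_mod_cast hi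
      show (i:ℝ) * c ≤ (n:ℝ) * c
      exact mul_le_mul_of_nonneg_right h hc.le
  have hxmemT : ∀ i ≤ n, x i ∈ Icc (0:ℝ) T :=
    fun i hi => ⟨(hxmem i hi).1, (hxmem i hi).2.trans htT⟩
  set d : ℕ → ℝ := fun i => qv (x (i+1)) - qv (x i) with hddef
  have hd : ∀ i < n, 0 ≤ d i := by
    intro i hi
    have := hqv_mono (hxmemT i hi.le) (hxmemT (i+1) hi) (hxmono i)
    simp only [hddef]; linarith
  have hμtoReal : ∀ i < n, (μ (Ioc (x i) (x (i+1)))).toReal = d i := by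
    intro i hi
    rw [hμ _ _ (hxmem i hi.le).1 (hxmono i) ((hxmem (i+1) hi).2.trans htT),
      ENNReal.toReal_ofReal (hd i hi)]
  set S : ℝ := ∑ i ∈ Finset.range n, φ (x i) * d i with hSdef
  set S' : ℝ → ℝ := fun ε => ∑ i ∈ Finset.range n,
    φ (x i) * ∫ s in (x i)..(x (i+1)), (f (s+ε) - f s)^2 / ε with hS'def
  have hS' : Tendsto S' (𝓝[>] (0:ℝ)) (𝓝 S) := by
    apply tendsto_finset_sum
    intro i hi
    rw [Finset.mem_range] at hi
    have h1 : Tendsto (fun ε => V (x (i+1)) ε - V (x i) ε) (𝓝[>] (0:ℝ)) (𝓝 (d i)) :=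
      (hV _ (hxmemT (i+1) hi)).sub (hV _ (hxmemT i hi.le))
    have h2 : ∀ ε : ℝ, V (x (i+1)) ε - V (x i) ε
        = ∫ s in (x i)..(x (i+1)), (f (s+ε) - f s)^2 / ε := by
      intro ε
      exact intervalIntegral.integral_interval_sub_left (hwint ε 0 (x (i+1))) (hwint ε 0 (x i))
    exact (Tendsto.congr h2 h1).const_mul _
  -- distance from Lμ to S
  set Lμ : ℝ := ∫ s in Set.Ioc (0:ℝ) t, φ s ∂μ with hLdef
  have hLsplit : Lμ = ∑ i ∈ Finset.range n, ∫ s in Set.Ioc (x i) (x (i+1)), φ s ∂μ := by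
    have h1 : ∑ i ∈ Finset.range n, ∫ s in (x i)..(x (i+1)), φ s ∂μ
        = ∫ s in (x 0)..(x n), φ s ∂μ :=
      intervalIntegral.sum_integral_adjacent_intervals (fun k hk =>
        hφint _ _ (hxmem k hk.le).1 (hxmono k) ((hxmem (k+1) hk).2.trans htT))
    rw [hLdef, ← intervalIntegral.integral_of_le ht0.le, ← hx0, ← hxn, ← h1]
    apply Finset.sum_congr rfl
    intro i hi
    rw [intervalIntegral.integral_of_le (hxmono i)]
  have hLS : |Lμ - S| ≤ δ * qv t := by
    have hper : ∀ i < n,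
        |(∫ s in Set.Ioc (x i) (x (i+1)), φ s ∂μ) - φ (x i) * d i| ≤ δ * d i := by
      intro i hi
      have hfin : μ (Ioc (x i) (x (i+1))) < ⊤ := by
        rw [hμ _ _ (hxmem i hi.le).1 (hxmono i) ((hxmem (i+1) hi).2.trans htT)]
        exact ENNReal.ofReal_lt_top
      have hconst : φ (x i) * d i = ∫ s in Set.Ioc (x i) (x (i+1)), φ (x i) ∂μ := by
        rw [setIntegral_const, measureReal_def, hμtoReal i hi, smul_eq_mul, mul_comm]
      rw [hconst, ← integral_sub]
      · have := norm_setIntegral_le_of_norm_le_const (μ := μ)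
          (f := fun s => φ s - φ (x i)) hfin (C := δ) ?_
        · rw [Real.norm_eq_abs] at this
          rw [measureReal_def, hμtoReal i hi] at this
          exact this
        · intro s hs
          rw [Real.norm_eq_abs]
          have hsI : s ∈ Icc (0:ℝ) t :=
            ⟨(hxmem i hi.le).1.trans hs.1.le, hs.2.trans (hxmem (i+1) hi).2⟩
          have hdist : dist s (x i) < η := by
            rw [Real.dist_eq, abs_of_nonneg (by linarith [hs.1.le] : (0:ℝ) ≤ s - x i)]
            have : x (i+1) - x i = c := by simp only [hxdef]; push_cast; ring
            linarith [hs.2]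
          exact (Real.dist_eq _ _ ▸ hucφ s hsI (x i) (hxmem i hi.le) hdist).le
      · have h := hφint _ _ (hxmem i hi.le).1 (hxmono i) ((hxmem (i+1) hi).2.trans htT)
        rw [intervalIntegrable_iff, uIoc_of_le (hxmono i)] at h
        exact h
      · exact integrableOn_const hfin.ne
    rw [hLsplit, hSdef, ← Finset.sum_sub_distrib]
    calc |∑ i ∈ Finset.range n, ((∫ s in Set.Ioc (x i) (x (i+1)), φ s ∂μ) - φ (x i) * d i)|
        ≤ ∑ i ∈ Finset.range n, |(∫ s in Set.Ioc (x i) (x (i+1)), φ s ∂μ) - φ (x i) * d i| :=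
          Finset.abs_sum_le_sum_abs _ _
      _ ≤ ∑ i ∈ Finset.range n, δ * d i := by
          apply Finset.sum_le_sum
          intro i hi
          exact hper i (Finset.mem_range.mp hi)
      _ = δ * qv t := by
          rw [← Finset.mul_sum, hddef]
          rw [Finset.sum_range_sub (fun i => qv (x i))]
          rw [hx0, hxn, hqv_zero, sub_zero]
  -- bound |Pφ ε - S' ε| ≤ δ * V t ε for ε > 0
  have hbound1 : ∀ ε : ℝ, 0 < ε →
      |(∫ s in (0:ℝ)..t, φ s * ((f (s+ε) - f s)^2 / ε)) - S' ε| ≤ δ * V t ε := by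
    intro ε hε
    have hφwint : ∀ a b : ℝ, IntervalIntegrable (fun s => φ s * ((f (s+ε) - f s)^2 / ε)) volume a b :=
      fun a b => (hφ.mul (hw ε)).intervalIntegrable a b
    have hsplit : (∫ s in (0:ℝ)..t, φ s * ((f (s+ε) - f s)^2 / ε))
        = ∑ i ∈ Finset.range n, ∫ s in (x i)..(x (i+1)), φ s * ((f (s+ε) - f s)^2 / ε) := by
      rw [intervalIntegral.sum_integral_adjacent_intervals (fun k _ => hφwint _ _), hx0, hxn]
    have hVsplit : V t ε = ∑ i ∈ Finset.range n, ∫ s in (x i)..(x (i+1)), (f (s+ε) - f s)^2 / ε := by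
      rw [intervalIntegral.sum_integral_adjacent_intervals (fun k _ => hwint ε _ _), hx0, hxn]
    have hper : ∀ i < n,
        |(∫ s in (x i)..(x (i+1)), φ s * ((f (s+ε) - f s)^2 / ε))
          - φ (x i) * ∫ s in (x i)..(x (i+1)), (f (s+ε) - f s)^2 / ε|
        ≤ δ * ∫ s in (x i)..(x (i+1)), (f (s+ε) - f s)^2 / ε := by
      intro i hi
      have e1 : (∫ s in (x i)..(x (i+1)), (φ s - φ (x i)) * ((f (s+ε) - f s)^2 / ε))
          = (∫ s in (x i)..(x (i+1)), φ s * ((f (s+ε) - f s)^2 / ε))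
            - φ (x i) * ∫ s in (x i)..(x (i+1)), (f (s+ε) - f s)^2 / ε := by
        rw [← intervalIntegral.integral_const_mul, ← intervalIntegral.integral_sub (hφwint _ _)
          (show IntervalIntegrable (fun s => φ (x i) * ((f (s+ε) - f s)^2 / ε)) volume (x i) (x (i+1))
            from (continuous_const.mul (hw ε)).intervalIntegrable _ _)]
        apply intervalIntegral.integral_congr
        intro s _
        ring
      rw [← e1, ← Real.norm_eq_abs]
      have hb := intervalIntegral.norm_integral_le_abs_of_norm_le
        (μ := volume) (a := x i) (b := x (i+1))
        (f := fun s => (φ s - φ (x i)) * ((f (s+ε) - f s)^2 / ε))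
        (g := fun s => δ * ((f (s+ε) - f s)^2 / ε)) ?_ ((continuous_const.mul (hw ε)).intervalIntegrable _ _)
      · rw [intervalIntegral.integral_const_mul] at hb
        refine hb.trans (le_of_eq (abs_of_nonneg ?_))
        apply mul_nonneg hδ.le
        apply intervalIntegral.integral_nonneg (hxmono i)
        intro s _
        exact hwnn ε hε s
      · apply ae_restrict_of_forall_mem measurableSet_uIoc
        intro s hs
        rw [uIoc_of_le (hxmono i)] at hs
        rw [Real.norm_eq_abs, abs_mul, abs_of_nonneg (hwnn ε hε s)]
        apply mul_le_mul_of_nonneg_right _ (hwnn ε hε s)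
        have hsI : s ∈ Icc (0:ℝ) t :=
          ⟨(hxmem i hi.le).1.trans hs.1.le, hs.2.trans (hxmem (i+1) hi).2⟩
        have hdist : dist s (x i) < η := by
          rw [Real.dist_eq, abs_of_nonneg (by linarith [hs.1.le] : (0:ℝ) ≤ s - x i)]
          have : x (i+1) - x i = c := by simp only [hxdef]; push_cast; ring
          linarith [hs.2]
        exact (Real.dist_eq _ _ ▸ hucφ s hsI (x i) (hxmem i hi.le) hdist).le
    rw [hsplit, hS'def, hVsplit, ← Finset.sum_sub_distrib, Finset.mul_sum]
    calc |∑ i ∈ Finset.range n, ((∫ s in (x i)..(x (i+1)), φ s * ((f (s+ε) - f s)^2 / ε))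
            - φ (x i) * ∫ s in (x i)..(x (i+1)), (f (s+ε) - f s)^2 / ε)|
        ≤ ∑ i ∈ Finset.range n, |(∫ s in (x i)..(x (i+1)), φ s * ((f (s+ε) - f s)^2 / ε))
            - φ (x i) * ∫ s in (x i)..(x (i+1)), (f (s+ε) - f s)^2 / ε| :=
          Finset.abs_sum_le_sum_abs _ _
      _ ≤ ∑ i ∈ Finset.range n, δ * ∫ s in (x i)..(x (i+1)), (f (s+ε) - f s)^2 / ε := by
          apply Finset.sum_le_sum
          intro i hi
          exact hper i (Finset.mem_range.mp hi)
  -- combine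
  have Ev1 : ∀ᶠ ε in 𝓝[>] (0:ℝ), V t ε < qv t + 1 :=
    (hV t ⟨ht0.le, htT⟩).eventually_lt_const (by linarith)
  have Ev2 : ∀ᶠ ε in 𝓝[>] (0:ℝ), |S' ε - S| < δ := by
    have := Metric.tendsto_nhds.mp hS' δ hδ
    exact this.mono (fun ε h => by rwa [Real.dist_eq] at h)
  filter_upwards [Ev1, Ev2, self_mem_nhdsWithin] with ε h1 h2 h3
  rw [Set.mem_Ioi] at h3
  have hb1 := hbound1 ε h3
  have hVnn : 0 ≤ V t ε := intervalIntegral.integral_nonneg ht0.le (fun s _ => hwnn ε h3 s)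
  calc |(∫ s in (0:ℝ)..t, φ s * ((f (s+ε) - f s)^2 / ε)) - Lμ|
      ≤ |(∫ s in (0:ℝ)..t, φ s * ((f (s+ε) - f s)^2 / ε)) - S' ε| + |S' ε - S| + |S - Lμ| := by
        have := abs_sub_le (∫ s in (0:ℝ)..t, φ s * ((f (s+ε) - f s)^2 / ε)) (S' ε) Lμ
        have h4 := abs_sub_le (S' ε) S Lμ
        linarith
    _ ≤ δ * (qv t + 1) + δ + δ * qv t := by
        have : |S - Lμ| = |Lμ - S| := abs_sub_comm _ _
        rw [this]
        have hm : δ * V t ε ≤ δ * (qv t + 1) := mul_le_mul_of_nonneg_left h1.le hδ.le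
        linarith [hb1, h2.le, hLS]
    _ = (2 * qv t + 2) * δ := by ring

/-- **Deterministic Itô formula via regularizations for finite quadratic variation
functions.**  Let `f : [0,T] → ℝ` be continuous, extended by `f(s) = f(0)` for `s < 0`
and `f(s) = f(T)` for `s > T`, with deterministic quadratic variation `[f] = qv`
(continuous, nondecreasing, `qv 0 = 0`), and let `μ` be the Lebesgue–Stieltjes measure
of `qv` on `[0,T]` (i.e. `μ(]u,v]) = qv v - qv u`).  Let `F ∈ C^{1,2}([0,T] × ℝ; ℝ)`,
with partial derivatives `∂_t F = Ft`, `∂_x F = Fx`, `∂²_{xx} F = Fxx`.  Then for every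
`t ∈ [0,T]` the forward-regularization limit
`limit_{ε→0⁺} ∫_0^t Fx(s, f(s)) (f(s+ε) - f(s))/ε ds` exists and equals
`F(t,f(t)) - F(0,f(0)) - ∫_0^t Ft(s,f(s)) ds - (1/2) ∫_{]0,t]} Fxx(s,f(s)) dμ(s)`. -/
theorem deterministic_ito_formula
    (T : ℝ) (hT : 0 < T) (f : ℝ → ℝ) (hf : Continuous f)
    (hfext0 : ∀ s < (0 : ℝ), f s = f 0) (hfextT : ∀ s > T, f s = f T)
    (qv : ℝ → ℝ)
    (hqv_mono : MonotoneOn qv (Set.Icc 0 T))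
    (hqv_cont : ContinuousOn qv (Set.Icc 0 T))
    (hqv_zero : qv 0 = 0)
    (hqv_lim : ∀ x ∈ Set.Icc (0 : ℝ) T,
      Tendsto (fun ε : ℝ => (1 / ε) * ∫ s in (0 : ℝ)..x, (f (s + ε) - f s) ^ 2)
        (𝓝[>] 0) (𝓝 (qv x)))
    (μ : Measure ℝ)
    (hμ : ∀ u v : ℝ, 0 ≤ u → u ≤ v → v ≤ T →
      μ (Set.Ioc u v) = ENNReal.ofReal (qv v - qv u))
    (F Ft Fx Fxx : ℝ → ℝ → ℝ)
    (hF_cont : ContinuousOn (fun p : ℝ × ℝ => F p.1 p.2) (Set.Icc 0 T ×ˢ Set.univ))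
    (hFt : ∀ x : ℝ, ∀ t ∈ Set.Icc (0 : ℝ) T,
      HasDerivWithinAt (fun r => F r x) (Ft t x) (Set.Icc 0 T) t)
    (hFx : ∀ t ∈ Set.Icc (0 : ℝ) T, ∀ x : ℝ, HasDerivAt (fun y => F t y) (Fx t x) x)
    (hFxx : ∀ t ∈ Set.Icc (0 : ℝ) T, ∀ x : ℝ, HasDerivAt (fun y => Fx t y) (Fxx t x) x)
    (hFt_cont : ContinuousOn (fun p : ℝ × ℝ => Ft p.1 p.2) (Set.Icc 0 T ×ˢ Set.univ))
    (hFx_cont : ContinuousOn (fun p : ℝ × ℝ => Fx p.1 p.2) (Set.Icc 0 T ×ˢ Set.univ))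
    (hFxx_cont : ContinuousOn (fun p : ℝ × ℝ => Fxx p.1 p.2) (Set.Icc 0 T ×ˢ Set.univ)) :
    ∀ t ∈ Set.Icc (0 : ℝ) T,
      Tendsto (fun ε : ℝ => ∫ s in (0 : ℝ)..t, Fx s (f s) * (f (s + ε) - f s) / ε)
        (𝓝[>] 0)
        (𝓝 (F t (f t) - F 0 (f 0) - (∫ s in (0 : ℝ)..t, Ft s (f s))
              - (1 / 2) * ∫ s in Set.Ioc (0 : ℝ) t, Fxx s (f s) ∂μ)) := by
  intro t ht
  obtain ⟨ht0, htT⟩ := ht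
  rcases eq_or_lt_of_le ht0 with h0 | ht0'
  · rw [← h0]
    simp only [intervalIntegral.integral_same, Set.Ioc_self, Measure.restrict_empty,
      integral_zero_measure, sub_self, mul_zero, sub_zero, zero_sub, neg_zero]
    exact tendsto_const_nhds
  have hT0 : (0:ℝ) ≤ T := hT.le
  -- projection onto [0,T]
  set proj : ℝ → ℝ := fun s => max 0 (min s T) with hprojdef
  have hproj_mem : ∀ s, proj s ∈ Icc (0:ℝ) T := fun s =>
    ⟨le_max_left _ _, max_le hT0 (min_le_right _ _)⟩
  have hproj_id : ∀ s ∈ Icc (0:ℝ) T, proj s = s := by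
    intro s hs
    simp only [hprojdef]
    rw [min_eq_left hs.2, max_eq_right hs.1]
  have hproj_cont : Continuous proj := continuous_const.max (continuous_id.min continuous_const)
  have hfproj : ∀ s, f s = f (proj s) := by
    intro s
    rcases lt_or_ge s 0 with h | h
    · rw [hfext0 s h]
      simp only [hprojdef]
      rw [min_eq_left (h.le.trans hT0), max_eq_left h.le]
    rcases le_or_gt s T with h2 | h2
    · rw [hproj_id s ⟨h, h2⟩]
    · rw [hfextT s h2]
      simp only [hprojdef]
      rw [min_eq_right h2.le, max_eq_right hT0]
  -- bound for f
  obtain ⟨C, hC⟩ := isCompact_Icc.exists_bound_of_continuousOn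
    (hf.continuousOn : ContinuousOn f (Icc (0:ℝ) T))
  have hfC : ∀ s, f s ∈ Icc (-C) C := by
    intro s
    have h := hC (proj s) (hproj_mem s)
    rw [Real.norm_eq_abs] at h
    rw [hfproj s]
    exact ⟨(abs_le.mp h).1, (abs_le.mp h).2⟩
  -- compact rectangle
  have hK : IsCompact (Icc (0:ℝ) T ×ˢ Icc (-C) C) := isCompact_Icc.prod isCompact_Icc
  have hKsub : (Icc (0:ℝ) T ×ˢ Icc (-C) C) ⊆ Icc (0:ℝ) T ×ˢ (univ : Set ℝ) :=
    prod_mono_right (subset_univ _)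
  obtain ⟨M, hM⟩ := hK.exists_bound_of_continuousOn (hFt_cont.mono hKsub)
  have hM0 : 0 ≤ M :=
    le_trans (norm_nonneg _) (hM (0, f 0) ⟨⟨le_refl 0, hT0⟩, hfC 0⟩)
  -- increments of f are uniformly small
  have hincr : ∀ r > (0:ℝ), ∃ η > (0:ℝ), ∀ ε : ℝ, 0 < ε → ε < η →
      ∀ s : ℝ, |f (s+ε) - f s| < r := by
    intro r hr
    obtain ⟨η, hη, huc⟩ := Metric.uniformContinuousOn_iff.mp
      (isCompact_Icc.uniformContinuousOn_of_continuous
        (hf.continuousOn : ContinuousOn f (Icc (0:ℝ) T))) r hr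
    refine ⟨η, hη, fun ε hε0 hεη s => ?_⟩
    rw [hfproj (s+ε), hfproj s, ← Real.dist_eq]
    apply huc _ (hproj_mem _) _ (hproj_mem _)
    have hlip : dist (proj (s+ε)) (proj s) ≤ dist (s+ε) s := by
      rw [Real.dist_eq, Real.dist_eq]
      simp only [hprojdef]
      have h1 : |min (s+ε) T - min s T| ≤ max |s+ε - s| |T - T| := abs_min_sub_min_le_max _ _ _ _
      have h2 : |max 0 (min (s+ε) T) - max 0 (min s T)| ≤ max |(0:ℝ) - 0| |min (s+ε) T - min s T| :=
        abs_max_sub_max_le_max _ _ _ _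
      have h1' : |min (s+ε) T - min s T| ≤ |s+ε - s| := by
        refine h1.trans (le_of_eq ?_)
        rw [sub_self, abs_zero, max_eq_left (abs_nonneg _)]
      have h2' : |max 0 (min (s+ε) T) - max 0 (min s T)| ≤ |min (s+ε) T - min s T| := by
        refine h2.trans (le_of_eq ?_)
        rw [sub_self, abs_zero, max_eq_right (abs_nonneg _)]
      exact h2'.trans h1'
    calc dist (proj (s+ε)) (proj s) ≤ dist (s+ε) s := hlip
      _ < η := by rw [Real.dist_eq]; rw [show s + ε - s = ε by ring, abs_of_pos hε0]; exact hεη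
  -- composite continuity on Icc 0 t
  have hcomp : ∀ (G : ℝ → ℝ → ℝ), ContinuousOn (fun p : ℝ × ℝ => G p.1 p.2)
      (Icc (0:ℝ) T ×ˢ univ) → ∀ (h : ℝ → ℝ), Continuous h →
      ContinuousOn (fun s => G s (h s)) (Icc (0:ℝ) t) := by
    intro G hG h hh
    exact ContinuousOn.comp hG ((continuous_id.prodMk hh).continuousOn)
      (fun s hs => ⟨⟨hs.1, hs.2.trans htT⟩, mem_univ _⟩)
  -- global continuous version of s ↦ F(s, f s)
  have hgc : Continuous (fun s => F (proj s) (f s)) :=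
    hF_cont.comp_continuous (hproj_cont.prodMk hf) (fun s => ⟨hproj_mem s, mem_univ _⟩)
  have hφxxc : Continuous (fun s => Fxx (proj s) (f s)) :=
    hFxx_cont.comp_continuous (hproj_cont.prodMk hf) (fun s => ⟨hproj_mem s, mem_univ _⟩)
  -- uniform continuity of Ft, Fxx on K
  have hucFt := Metric.uniformContinuousOn_iff.mp
    (hK.uniformContinuousOn_of_continuous (hFt_cont.mono hKsub))
  have hucFxx := Metric.uniformContinuousOn_iff.mp
    (hK.uniformContinuousOn_of_continuous (hFxx_cont.mono hKsub))
  -- weight function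
  have hw : ∀ ε : ℝ, Continuous (fun s => (f (s+ε) - f s)^2 / ε) := fun ε =>
    (((hf.comp (continuous_add_right ε)).sub hf).pow 2).div_const ε
  have hVt : Tendsto (fun ε : ℝ => ∫ s in (0:ℝ)..t, (f (s+ε) - f s)^2/ε) (𝓝[>] (0:ℝ))
      (𝓝 (qv t)) :=
    Tendsto.congr (fun ε => by rw [intervalIntegral.integral_div]; ring)
      (hqv_lim t ⟨ht0, htT⟩)
  have hqvt : 0 ≤ qv t := by
    have := hqv_mono ⟨le_refl 0, hT0⟩ ⟨ht0, htT⟩ ht0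
    linarith [hqv_zero]
  -- continuity of the pieces
  have cc1 : ∀ ε : ℝ, 0 < ε → ContinuousOn (fun s => F (min (s+ε) T) (f (s+ε))) (Icc (0:ℝ) t) := by
    intro ε hε
    apply ContinuousOn.comp hF_cont
      ((((continuous_add_right ε).min continuous_const).prodMk
        (hf.comp (continuous_add_right ε))).continuousOn)
    intro s hs
    exact ⟨⟨le_min (by linarith [hs.1]) hT0, min_le_right _ _⟩, mem_univ _⟩
  have cc2 : ∀ ε : ℝ, ContinuousOn (fun s => F s (f (s+ε))) (Icc (0:ℝ) t) :=
    fun ε => hcomp F hF_cont (fun s => f (s+ε)) (hf.comp (continuous_add_right ε))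
  have ccF : ContinuousOn (fun s => F s (f s)) (Icc (0:ℝ) t) := hcomp F hF_cont f hf
  have ccFt : ContinuousOn (fun s => Ft s (f s)) (Icc (0:ℝ) t) := hcomp Ft hFt_cont f hf
  have ccFx : ContinuousOn (fun s => Fx s (f s)) (Icc (0:ℝ) t) := hcomp Fx hFx_cont f hf
  have ccFxx : ContinuousOn (fun s => Fxx s (f s)) (Icc (0:ℝ) t) := hcomp Fxx hFxx_cont f hf
  have huIcc : Set.uIcc (0:ℝ) t = Icc (0:ℝ) t := uIcc_of_le ht0
  have hi1 : ∀ ε : ℝ, 0 < ε → IntervalIntegrable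
      (fun s => (F (min (s+ε) T) (f (s+ε)) - F s (f (s+ε)))/ε) volume 0 t := by
    intro ε hε
    apply ContinuousOn.intervalIntegrable
    rw [huIcc]
    exact ((cc1 ε hε).sub (cc2 ε)).div_const ε
  have hi2 : ∀ ε : ℝ, IntervalIntegrable (fun s => Fx s (f s) * (f (s+ε) - f s) / ε)
      volume 0 t := by
    intro ε
    apply ContinuousOn.intervalIntegrable
    rw [huIcc]
    exact (ccFx.mul (((hf.comp (continuous_add_right ε)).sub hf).continuousOn)).div_const ε
  have hi3 : ∀ ε : ℝ, IntervalIntegrable (fun s => Fxx s (f s) * ((f (s+ε) - f s)^2/ε))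
      volume 0 t := by
    intro ε
    apply ContinuousOn.intervalIntegrable
    rw [huIcc]
    exact ccFxx.mul ((hw ε).continuousOn)
  have hi4 : ∀ ε : ℝ, IntervalIntegrable (fun s =>
      (F s (f (s+ε)) - F s (f s) - Fx s (f s) * (f (s+ε) - f s)
        - (1/2) * Fxx s (f s) * (f (s+ε) - f s)^2)/ε) volume 0 t := by
    intro ε
    apply ContinuousOn.intervalIntegrable
    rw [huIcc]
    apply ContinuousOn.div_const
    exact (((cc2 ε).sub ccF).sub
      (ccFx.mul (((hf.comp (continuous_add_right ε)).sub hf).continuousOn))).sub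
      ((continuousOn_const.mul ccFxx).mul
        ((((hf.comp (continuous_add_right ε)).sub hf).pow 2).continuousOn))
  have hdecomp : ∀ ε : ℝ, 0 < ε →
      (∫ s in (0:ℝ)..t, Fx s (f s) * (f (s+ε) - f s) / ε)
      = ((1/ε) * ∫ s in (0:ℝ)..t, (F (proj (s+ε)) (f (s+ε)) - F (proj s) (f s)))
        - (∫ s in (0:ℝ)..t, (F (min (s+ε) T) (f (s+ε)) - F s (f (s+ε)))/ε)
        - (1/2) * (∫ s in (0:ℝ)..t, Fxx s (f s) * ((f (s+ε) - f s)^2/ε))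
        - (∫ s in (0:ℝ)..t, (F s (f (s+ε)) - F s (f s) - Fx s (f s) * (f (s+ε) - f s)
            - (1/2) * Fxx s (f s) * (f (s+ε) - f s)^2)/ε) := by
    intro ε hε
    have hcong : ∀ s ∈ Set.uIcc (0:ℝ) t,
        (F (proj (s+ε)) (f (s+ε)) - F (proj s) (f s)) / ε
        = ((F (min (s+ε) T) (f (s+ε)) - F s (f (s+ε)))/ε
          + Fx s (f s) * (f (s+ε) - f s) / ε)
          + ((1/2) * (Fxx s (f s) * ((f (s+ε) - f s)^2/ε))
          + (F s (f (s+ε)) - F s (f s) - Fx s (f s) * (f (s+ε) - f s)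
            - (1/2) * Fxx s (f s) * (f (s+ε) - f s)^2)/ε) := by
      intro s hs
      rw [huIcc] at hs
      have h1 : proj (s+ε) = min (s+ε) T := by
        simp only [hprojdef]
        rw [max_eq_right (le_min (by linarith [hs.1]) hT0)]
      have h2 : proj s = s := hproj_id s ⟨hs.1, hs.2.trans htT⟩
      rw [h1, h2]
      field_simp
      ring
    have e0 : (∫ s in (0:ℝ)..t, (F (proj (s+ε)) (f (s+ε)) - F (proj s) (f s)) / ε)
        = ((∫ s in (0:ℝ)..t, ((F (min (s+ε) T) (f (s+ε)) - F s (f (s+ε)))/ε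
            + Fx s (f s) * (f (s+ε) - f s) / ε))
          + ∫ s in (0:ℝ)..t, ((1/2) * (Fxx s (f s) * ((f (s+ε) - f s)^2/ε))
            + (F s (f (s+ε)) - F s (f s) - Fx s (f s) * (f (s+ε) - f s)
              - (1/2) * Fxx s (f s) * (f (s+ε) - f s)^2)/ε)) := by
      rw [← intervalIntegral.integral_add ((hi1 ε hε).add (hi2 ε))
        (((hi3 ε).const_mul (1/2)).add (hi4 ε))]
      exact intervalIntegral.integral_congr hcong
    rw [intervalIntegral.integral_add (hi1 ε hε) (hi2 ε),
        intervalIntegral.integral_add ((hi3 ε).const_mul (1/2)) (hi4 ε),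
        intervalIntegral.integral_const_mul] at e0
    have e1 : (1/ε) * (∫ s in (0:ℝ)..t, (F (proj (s+ε)) (f (s+ε)) - F (proj s) (f s)))
        = ∫ s in (0:ℝ)..t, (F (proj (s+ε)) (f (s+ε)) - F (proj s) (f s)) / ε := by
      rw [intervalIntegral.integral_div]; ring
    rw [e1]
    linarith [e0]
  have hP0lim : Tendsto (fun ε : ℝ => (1/ε) * ∫ s in (0:ℝ)..t,
      (F (proj (s+ε)) (f (s+ε)) - F (proj s) (f s))) (𝓝[>] (0:ℝ))
      (𝓝 (F t (f t) - F 0 (f 0))) := by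
    have h := tendsto_P0 (fun s => F (proj s) (f s)) hgc t
    rw [hproj_id t ⟨ht0, htT⟩, hproj_id 0 ⟨le_refl 0, hT0⟩] at h
    exact h
  have hP3lim : Tendsto (fun ε : ℝ => ∫ s in (0:ℝ)..t, Fxx s (f s) * ((f (s+ε) - f s)^2/ε))
      (𝓝[>] (0:ℝ)) (𝓝 (∫ s in Set.Ioc (0:ℝ) t, Fxx s (f s) ∂μ)) := by
    have hkey := tendsto_qv_integral T f hf qv hqv_mono hqv_zero hqv_lim μ hμ t ht0' htT
      (fun s => Fxx (proj s) (f s)) hφxxc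
    have he2 : (∫ s in Set.Ioc (0:ℝ) t, Fxx (proj s) (f s) ∂μ)
        = ∫ s in Set.Ioc (0:ℝ) t, Fxx s (f s) ∂μ :=
      setIntegral_congr_fun measurableSet_Ioc
        (fun s hs => by rw [hproj_id s ⟨hs.1.le, hs.2.trans htT⟩])
    rw [he2] at hkey
    apply hkey.congr
    intro ε
    apply intervalIntegral.integral_congr
    intro s hs
    rw [huIcc] at hs
    simp only [hproj_id s ⟨hs.1, hs.2.trans htT⟩]
  -- P1 limit
  have hP1lim : Tendsto (fun ε : ℝ => ∫ s in (0:ℝ)..t,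
      (F (min (s+ε) T) (f (s+ε)) - F s (f (s+ε)))/ε) (𝓝[>] (0:ℝ))
      (𝓝 (∫ s in (0:ℝ)..t, Ft s (f s))) := by
    apply tendsto_of_forall_delta _ _ (T + 2*M + 1)
    intro δ hδ
    obtain ⟨r, hr, hFtδ⟩ := hucFt δ hδ
    obtain ⟨ηf, hηf, hfs⟩ := hincr r hr
    have hpos : 0 < min (min ηf r) (min T δ) := by
      apply lt_min (lt_min hηf hr) (lt_min hT hδ)
    filter_upwards [Ioo_mem_nhdsGT hpos] with ε hεmem
    obtain ⟨hε0, hεb⟩ := hεmem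
    have hεηf : ε < ηf := lt_of_lt_of_le hεb ((min_le_left _ _).trans (min_le_left _ _))
    have hεr : ε < r := lt_of_lt_of_le hεb ((min_le_left _ _).trans (min_le_right _ _))
    have hεT : ε < T := lt_of_lt_of_le hεb ((min_le_right _ _).trans (min_le_left _ _))
    have hεδ : ε < δ := lt_of_lt_of_le hεb ((min_le_right _ _).trans (min_le_right _ _))
    set cp := min t (T - ε) with hcpdef
    have hcp0 : 0 ≤ cp := le_min ht0 (by linarith)
    have hcpt : cp ≤ t := min_le_left _ _
    have hcpT : cp ≤ T - ε := min_le_right _ _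
    have htcp : t - cp ≤ ε := by
      rcases le_total t (T - ε) with h | h
      · rw [hcpdef, min_eq_left h]; linarith
      · rw [hcpdef, min_eq_right h]; linarith
    have cI1 : ContinuousOn (fun s => (F (min (s+ε) T) (f (s+ε)) - F s (f (s+ε)))/ε
        - Ft s (f s)) (Icc (0:ℝ) t) := (((cc1 ε hε0).sub (cc2 ε)).div_const ε).sub ccFt
    have hIab : ∀ a b : ℝ, a ∈ Icc (0:ℝ) t → b ∈ Icc (0:ℝ) t →
        IntervalIntegrable (fun s => (F (min (s+ε) T) (f (s+ε)) - F s (f (s+ε)))/ε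
          - Ft s (f s)) volume a b := by
      intro a b ha hb
      exact ((cI1.mono (uIcc_subset_Icc ha hb)).intervalIntegrable)
    have hmemt : t ∈ Icc (0:ℝ) t := ⟨ht0, le_refl t⟩
    have hmem0 : (0:ℝ) ∈ Icc (0:ℝ) t := ⟨le_refl 0, ht0⟩
    have hmemcp : cp ∈ Icc (0:ℝ) t := ⟨hcp0, hcpt⟩
    have hsplit : (∫ s in (0:ℝ)..t, (F (min (s+ε) T) (f (s+ε)) - F s (f (s+ε)))/ε)
        - (∫ s in (0:ℝ)..t, Ft s (f s))
        = (∫ s in (0:ℝ)..cp, ((F (min (s+ε) T) (f (s+ε)) - F s (f (s+ε)))/ε - Ft s (f s)))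
          + ∫ s in cp..t, ((F (min (s+ε) T) (f (s+ε)) - F s (f (s+ε)))/ε - Ft s (f s)) := by
      rw [intervalIntegral.integral_add_adjacent_intervals (hIab 0 cp hmem0 hmemcp)
        (hIab cp t hmemcp hmemt)]
      rw [intervalIntegral.integral_sub (hi1 ε hε0)
        ((ccFt.mono (by rw [huIcc])).intervalIntegrable)]
    have hb1 : |∫ s in (0:ℝ)..cp, ((F (min (s+ε) T) (f (s+ε)) - F s (f (s+ε)))/ε
        - Ft s (f s))| ≤ δ * |cp - 0| := by
      rw [← Real.norm_eq_abs]
      apply intervalIntegral.norm_integral_le_of_norm_le_const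
      intro s hs
      rw [uIoc_of_le hcp0] at hs
      have hs0 : 0 < s := hs.1
      have hsT : s ≤ T - ε := hs.2.trans hcpT
      have hsmem : s ∈ Icc (0:ℝ) T := ⟨hs0.le, by linarith⟩
      have hmin : min (s+ε) T = s + ε := min_eq_left (by linarith)
      have husub : Icc s (s+ε) ⊆ Icc (0:ℝ) T := Icc_subset_Icc hs0.le (by linarith)
      have hder : ∀ u ∈ Icc s (s+ε), HasDerivWithinAt
          (fun v => F v (f (s+ε)) - v * Ft s (f s)) (Ft u (f (s+ε)) - Ft s (f s))
          (Icc s (s+ε)) u := by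
        intro u hu
        exact ((hFt (f (s+ε)) u (husub hu)).mono husub).sub
          ((hasDerivAt_mul_const (Ft s (f s))).hasDerivWithinAt)
      have hbd : ∀ u ∈ Icc s (s+ε), ‖Ft u (f (s+ε)) - Ft s (f s)‖ ≤ δ := by
        intro u hu
        rw [Real.norm_eq_abs, ← Real.dist_eq]
        apply le_of_lt
        apply hFtδ (u, f (s+ε)) ⟨husub hu, hfC _⟩ (s, f s) ⟨hsmem, hfC s⟩
        rw [Prod.dist_eq]
        apply max_lt
        · rw [Real.dist_eq, abs_of_nonneg (by linarith [hu.1] : (0:ℝ) ≤ u - s)]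
          have := hu.2
          linarith
        · rw [Real.dist_eq]
          exact hfs ε hε0 hεηf s
      have hmvt := (convex_Icc s (s+ε)).norm_image_sub_le_of_norm_hasDerivWithin_le hder hbd
        (left_mem_Icc.mpr (by linarith)) (right_mem_Icc.mpr (by linarith))
      rw [Real.norm_eq_abs, Real.norm_eq_abs] at hmvt
      have hnum : |F (s+ε) (f (s+ε)) - F s (f (s+ε)) - ε * Ft s (f s)| ≤ δ * ε := by
        have e : F (s+ε) (f (s+ε)) - F s (f (s+ε)) - ε * Ft s (f s)
            = (F (s+ε) (f (s+ε)) - (s+ε) * Ft s (f s)) - (F s (f (s+ε)) - s * Ft s (f s)) := by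
          ring
        rw [e]
        refine hmvt.trans (le_of_eq ?_)
        rw [show s + ε - s = ε by ring, abs_of_pos hε0]
      rw [Real.norm_eq_abs, hmin]
      have e2 : (F (s+ε) (f (s+ε)) - F s (f (s+ε)))/ε - Ft s (f s)
          = (F (s+ε) (f (s+ε)) - F s (f (s+ε)) - ε * Ft s (f s))/ε := by
        field_simp
      rw [e2, abs_div, abs_of_pos hε0]
      exact (div_le_iff₀ hε0).mpr (by linarith)
    have hb2 : |∫ s in cp..t, ((F (min (s+ε) T) (f (s+ε)) - F s (f (s+ε)))/ε
        - Ft s (f s))| ≤ (2*M) * |t - cp| := by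
      rw [← Real.norm_eq_abs]
      apply intervalIntegral.norm_integral_le_of_norm_le_const
      intro s hs
      rw [uIoc_of_le hcpt] at hs
      have hsmem : s ∈ Icc (0:ℝ) T := ⟨hcp0.trans hs.1.le, hs.2.trans htT⟩
      have hminmem : min (s+ε) T ∈ Icc (0:ℝ) T :=
        ⟨le_min (by linarith [hsmem.1]) hT0, min_le_right _ _⟩
      have hder : ∀ u ∈ Icc (0:ℝ) T, HasDerivWithinAt (fun v => F v (f (s+ε)))
          (Ft u (f (s+ε))) (Icc (0:ℝ) T) u := fun u hu => hFt _ u hu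
      have hbd : ∀ u ∈ Icc (0:ℝ) T, ‖Ft u (f (s+ε))‖ ≤ M :=
        fun u hu => hM (u, f (s+ε)) ⟨hu, hfC _⟩
      have hmvt := (convex_Icc (0:ℝ) T).norm_image_sub_le_of_norm_hasDerivWithin_le hder hbd
        hsmem hminmem
      rw [Real.norm_eq_abs, Real.norm_eq_abs] at hmvt
      have hmind : |min (s+ε) T - s| ≤ ε := by
        have hge : s ≤ min (s+ε) T := le_min (by linarith) hsmem.2
        rw [abs_of_nonneg (by linarith)]
        have := min_le_left (s+ε) T
        linarith
      have h1 : |F (min (s+ε) T) (f (s+ε)) - F s (f (s+ε))| ≤ M * ε :=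
        hmvt.trans (mul_le_mul_of_nonneg_left hmind hM0)
      have h2 : |Ft s (f s)| ≤ M := by
        have := hM (s, f s) ⟨hsmem, hfC s⟩
        rwa [Real.norm_eq_abs] at this
      have h3 : |(F (min (s+ε) T) (f (s+ε)) - F s (f (s+ε)))/ε| ≤ M := by
        rw [abs_div, abs_of_pos hε0]
        exact (div_le_iff₀ hε0).mpr (by linarith)
      rw [Real.norm_eq_abs]
      obtain ⟨h3a, h3b⟩ := abs_le.mp h3
      obtain ⟨h2a, h2b⟩ := abs_le.mp h2
      rw [abs_le]
      constructor <;> [linarith; linarith]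
    calc |(∫ s in (0:ℝ)..t, (F (min (s+ε) T) (f (s+ε)) - F s (f (s+ε)))/ε)
          - (∫ s in (0:ℝ)..t, Ft s (f s))|
        ≤ δ * |cp - 0| + (2*M) * |t - cp| := by
          rw [hsplit]
          exact (abs_add_le _ _).trans (add_le_add hb1 hb2)
      _ ≤ (T + 2*M + 1) * δ := by
          rw [sub_zero, abs_of_nonneg hcp0, abs_of_nonneg (by linarith : (0:ℝ) ≤ t - cp)]
          have h4 : cp ≤ T := hcpt.trans htT
          nlinarith [htcp, hεδ, hδ.le, hM0]
  -- remainder limit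
  have hPRlim : Tendsto (fun ε : ℝ => ∫ s in (0:ℝ)..t,
      (F s (f (s+ε)) - F s (f s) - Fx s (f s) * (f (s+ε) - f s)
        - (1/2) * Fxx s (f s) * (f (s+ε) - f s)^2)/ε) (𝓝[>] (0:ℝ)) (𝓝 0) := by
    apply tendsto_of_forall_delta _ _ (qv t + 1)
    intro δ hδ
    obtain ⟨r, hr, hFxxδ⟩ := hucFxx δ hδ
    obtain ⟨ηf, hηf, hfs⟩ := hincr r hr
    filter_upwards [hVt.eventually_lt_const (lt_add_one (qv t)),
      Ioo_mem_nhdsGT hηf] with ε hVε hεmem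
    obtain ⟨hε0, hεη⟩ := hεmem
    rw [sub_zero]
    have hpt : ∀ s ∈ Set.uIoc (0:ℝ) t,
        ‖(F s (f (s+ε)) - F s (f s) - Fx s (f s) * (f (s+ε) - f s)
          - (1/2) * Fxx s (f s) * (f (s+ε) - f s)^2)/ε‖
        ≤ δ * ((f (s+ε) - f s)^2/ε) := by
      intro s hs
      rw [uIoc_of_le ht0] at hs
      have hsmem : s ∈ Icc (0:ℝ) T := ⟨hs.1.le, hs.2.trans htT⟩
      have hab : |f (s+ε) - f s| < r := hfs ε hε0 hεη s
      have hmemC : ∀ y ∈ uIcc (f s) (f (s+ε)), y ∈ Icc (-C) C := by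
        intro y hy
        rw [mem_uIcc] at hy
        have ha := hfC s
        have hb := hfC (s+ε)
        rcases hy with ⟨h1, h2⟩ | ⟨h1, h2⟩ <;> constructor <;>
          [linarith [ha.1]; linarith [hb.2]; linarith [hb.1]; linarith [ha.2]]
      have step1 : ∀ y ∈ uIcc (f s) (f (s+ε)),
          ‖Fx s y - Fx s (f s) - Fxx s (f s) * (y - f s)‖ ≤ δ * |f (s+ε) - f s| := by
        intro y hy
        have hder : ∀ z ∈ uIcc (f s) (f (s+ε)), HasDerivWithinAt
            (fun v => Fx s v - Fxx s (f s) * v) (Fxx s z - Fxx s (f s))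
            (uIcc (f s) (f (s+ε))) z := by
          intro z _
          exact ((hFxx s hsmem z).sub
            (by simpa using (hasDerivAt_id z).const_mul (Fxx s (f s)))).hasDerivWithinAt
        have hbd : ∀ z ∈ uIcc (f s) (f (s+ε)), ‖Fxx s z - Fxx s (f s)‖ ≤ δ := by
          intro z hz
          rw [Real.norm_eq_abs, ← Real.dist_eq]
          apply le_of_lt
          apply hFxxδ (s, z) ⟨hsmem, hmemC z hz⟩ (s, f s) ⟨hsmem, hfC s⟩
          rw [Prod.dist_eq]
          apply max_lt (by rw [dist_self]; exact hr)
          rw [Real.dist_eq]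
          exact lt_of_le_of_lt (abs_sub_le_of_mem_uIcc hz) hab
        have hmvt := (convex_uIcc (f s) (f (s+ε))).norm_image_sub_le_of_norm_hasDerivWithin_le
          hder hbd left_mem_uIcc hy
        have e : Fx s y - Fx s (f s) - Fxx s (f s) * (y - f s)
            = (Fx s y - Fxx s (f s) * y) - (Fx s (f s) - Fxx s (f s) * f s) := by ring
        rw [Real.norm_eq_abs, e, ← Real.norm_eq_abs]
        refine hmvt.trans ?_
        rw [Real.norm_eq_abs]
        exact mul_le_mul_of_nonneg_left (abs_sub_le_of_mem_uIcc hy) hδ.le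
      have hder2 : ∀ y ∈ uIcc (f s) (f (s+ε)), HasDerivWithinAt
          (fun v => F s v - Fx s (f s) * v - (1/2) * Fxx s (f s) * (v - f s)^2)
          (Fx s y - Fx s (f s) - Fxx s (f s) * (y - f s))
          (uIcc (f s) (f (s+ε))) y := by
        intro y _
        have h1 : HasDerivAt
            (fun v => F s v - Fx s (f s) * v - (1/2) * Fxx s (f s) * (v - f s)^2)
            (Fx s y - Fx s (f s) * 1 - (1/2) * Fxx s (f s) * ((2:ℕ) * (y - f s)^1 * 1)) y := by
          exact ((hFx s hsmem y).sub
            (by simpa using (hasDerivAt_id y).const_mul (Fx s (f s)))).sub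
            ((((hasDerivAt_id y).sub_const (f s)).pow 2).const_mul ((1/2) * Fxx s (f s)))
        have h2 := h1.hasDerivWithinAt (s := uIcc (f s) (f (s+ε)))
        exact h2.congr_deriv (by push_cast; ring)
      have hmvt2 := (convex_uIcc (f s) (f (s+ε))).norm_image_sub_le_of_norm_hasDerivWithin_le
        hder2 step1 left_mem_uIcc right_mem_uIcc
      have hnum : |F s (f (s+ε)) - F s (f s) - Fx s (f s) * (f (s+ε) - f s)
          - (1/2) * Fxx s (f s) * (f (s+ε) - f s)^2| ≤ δ * (f (s+ε) - f s)^2 := by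
        have e2 : F s (f (s+ε)) - F s (f s) - Fx s (f s) * (f (s+ε) - f s)
            - (1/2) * Fxx s (f s) * (f (s+ε) - f s)^2
            = (F s (f (s+ε)) - Fx s (f s) * f (s+ε) - (1/2) * Fxx s (f s) * (f (s+ε) - f s)^2)
              - (F s (f s) - Fx s (f s) * f s - (1/2) * Fxx s (f s) * (f s - f s)^2) := by
          ring
        rw [e2, ← Real.norm_eq_abs]
        refine hmvt2.trans (le_of_eq ?_)
        rw [Real.norm_eq_abs, mul_assoc, ← abs_mul, abs_mul_self]
        ring
      rw [Real.norm_eq_abs, abs_div, abs_of_pos hε0, ← mul_div_assoc]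
      exact (div_le_div_iff_of_pos_right hε0).mpr hnum
    have hb := intervalIntegral.norm_integral_le_abs_of_norm_le (μ := volume) (a := (0:ℝ)) (b := t)
      (ae_restrict_of_forall_mem measurableSet_uIoc hpt)
      ((continuous_const.mul (hw ε)).intervalIntegrable 0 t)
    rw [intervalIntegral.integral_const_mul] at hb
    have hVnn : 0 ≤ ∫ s in (0:ℝ)..t, (f (s+ε) - f s)^2/ε :=
      intervalIntegral.integral_nonneg ht0 (fun s _ => div_nonneg (sq_nonneg _) hε0.le)
    rw [Real.norm_eq_abs] at hb
    refine hb.trans ?_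
    rw [abs_of_nonneg (mul_nonneg hδ.le hVnn)]
    calc δ * (∫ s in (0:ℝ)..t, (f (s+ε) - f s)^2/ε) ≤ δ * (qv t + 1) :=
          mul_le_mul_of_nonneg_left hVε.le hδ.le
      _ = (qv t + 1) * δ := by ring
  -- final assembly
  have hmain := ((hP0lim.sub hP1lim).sub (hP3lim.const_mul (1/2))).sub hPRlim
  rw [sub_zero] at hmain
  apply Tendsto.congr' _ hmain
  filter_upwards [self_mem_nhdsWithin] with ε hε
  exact (hdecomp ε hε).symm
end

section
/- Let a<b be real numbers, let f:[a,b]→ℝ be a càdlàg function of bounded variation, and let g:[a,b]→ℝ be a càdlàg function. Write f_{J̄} for the extension of f to ℝ given by f_{J̄}(x)=f(b) for x>b, f_{J̄}(x)=f(x) on [a,b], f_{J̄}(x)=0 for x<a. Then the (deterministic) forward integral ∫_{]a,b]} g d⁻f exists, i.e. the limit lim_{ε→0⁺} ∫_a^b g(s) (f_{J̄}(s+ε)−f_{J̄}(s))/ε ds exists, and it equals the Lebesgue–Stieltjes integral ∫_{]a,b]} g(s⁻) df(s) of the left-limit function s↦g(s⁻) against the measure df determined by df(]a,x])=f(x)−f(a).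 -/
open MeasureTheory Filter Topology Set

/-- The extension `f_{J̄}` of `f : [a,b] → ℝ` to `ℝ`: `f_{J̄}(x) = f(b)` for `x > b`,
`f_{J̄}(x) = f(x)` on `[a,b]`, and `f_{J̄}(x) = 0` for `x < a`. -/
noncomputable def extendJbar (a b : ℝ) (f : ℝ → ℝ) (x : ℝ) : ℝ :=
  if x < a then 0 else if x ≤ b then f x else f b

namespace ForwardIntegralAux

variable {a b : ℝ} {g gl : ℝ → ℝ}

/-- A càdlàg function on `[a,b]` is bounded. -/
lemma cadlag_bounded (hab : a < b)
    (hg_right : ∀ s ∈ Set.Ico a b, Tendsto g (𝓝[Set.Ioc s b] s) (𝓝 (g s)))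
    (hg_left : ∀ s ∈ Set.Ioc a b, Tendsto g (𝓝[Set.Ioo a s] s) (𝓝 (gl s))) :
    ∃ C : ℝ, 0 ≤ C ∧ ∀ x ∈ Set.Icc a b, |g x| ≤ C := by
  have key : ∀ x ∈ Set.Icc a b, ∃ U : Set ℝ, U ∈ 𝓝 x ∧
      ∃ Cx : ℝ, ∀ y ∈ U ∩ Set.Icc a b, |g y| ≤ Cx := by
    intro x hx
    have e1 : ∀ᶠ y in 𝓝 x, y ∈ Set.Ioc x b → |g y - g x| < 1 := by
      rcases lt_or_eq_of_le hx.2 with hxb | hxb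
      · have h := Metric.tendsto_nhds.1 (hg_right x ⟨hx.1, hxb⟩) 1 one_pos
        rw [eventually_nhdsWithin_iff] at h
        simpa [Real.dist_eq] using h
      · filter_upwards with y hy
        exact absurd (hy.1.trans_le hy.2) (by simp [hxb])
    rcases eq_or_lt_of_le hx.1 with h1 | h1
    · refine ⟨_, e1, |g x| + 1, ?_⟩
      rintro y ⟨hyU, hyI⟩
      rcases eq_or_lt_of_le (h1 ▸ hyI.1 : x ≤ y) with rfl | hxy
      · linarith [abs_nonneg (g x)]
      · have h := hyU ⟨hxy, hyI.2⟩
        calc |g y| = |(g y - g x) + g x| := by ring_nf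
          _ ≤ |g y - g x| + |g x| := abs_add_le _ _
          _ ≤ |g x| + 1 := by linarith
    · have e2 : ∀ᶠ y in 𝓝 x, y ∈ Set.Ioo a x → |g y - gl x| < 1 := by
        have h := Metric.tendsto_nhds.1 (hg_left x ⟨h1, hx.2⟩) 1 one_pos
        rw [eventually_nhdsWithin_iff] at h
        simpa [Real.dist_eq] using h
      have e3 : ∀ᶠ y in 𝓝 x, a < y := eventually_gt_nhds h1
      refine ⟨_, e1.and (e2.and e3), max (|g x|) (max (|g x| + 1) (|gl x| + 1)), ?_⟩
      rintro y ⟨⟨hy1, hy2, hy3⟩, hyI⟩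
      rcases lt_trichotomy y x with h | h | h
      · have hb := hy2 ⟨hy3, h⟩
        have : |g y| ≤ |gl x| + 1 := by
          calc |g y| = |(g y - gl x) + gl x| := by ring_nf
            _ ≤ |g y - gl x| + |gl x| := abs_add_le _ _
            _ ≤ |gl x| + 1 := by linarith
        exact this.trans ((le_max_right _ _).trans (le_max_right _ _))
      · subst h; exact le_max_left _ _
      · have hb := hy1 ⟨h, hyI.2⟩
        have : |g y| ≤ |g x| + 1 := by
          calc |g y| = |(g y - g x) + g x| := by ring_nf
            _ ≤ |g y - g x| + |g x| := abs_add_le _ _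
            _ ≤ |g x| + 1 := by linarith
        exact this.trans ((le_max_left _ _).trans (le_max_right _ _))
  choose! U hU C hC using key
  obtain ⟨t, hts, hcov⟩ := isCompact_Icc.elim_nhds_subcover U (fun x hx => hU x hx)
  refine ⟨∑ x ∈ t, |C x|, Finset.sum_nonneg fun _ _ => abs_nonneg _, ?_⟩
  intro y hy
  obtain ⟨x, hxt, hyU⟩ := Set.mem_iUnion₂.1 (hcov hy)
  calc |g y| ≤ C x := hC x (hts x hxt) y ⟨hyU, hy⟩
    _ ≤ |C x| := le_abs_self _
    _ ≤ ∑ x ∈ t, |C x| := Finset.single_le_sum (fun i _ => abs_nonneg (C i)) hxt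

/-- A right-continuous function on `[a,b]` is a.e. measurable there. -/
lemma cadlag_aemeasurable
    (hg_right : ∀ s ∈ Set.Ico a b, Tendsto g (𝓝[Set.Ioc s b] s) (𝓝 (g s))) :
    AEMeasurable g (volume.restrict (Set.Icc a b)) := by
  have hmeas : ∀ n : ℕ, Measurable fun x : ℝ => g (min b ((⌈x * 2 ^ n⌉ : ℤ) / 2 ^ n)) := by
    intro n
    have h1 : Measurable fun x : ℝ => (⌈x * 2 ^ n⌉ : ℤ) :=
      Int.measurable_ceil.comp (measurable_id.mul_const _)
    exact (measurable_of_countable fun k : ℤ => g (min b ((k : ℝ) / 2 ^ n))).comp h1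
  have hconv : ∀ x ∈ Set.Icc a b,
      Tendsto (fun n : ℕ => g (min b ((⌈x * 2 ^ n⌉ : ℤ) / 2 ^ n))) atTop (𝓝 (g x)) := by
    intro x hx
    set t : ℕ → ℝ := fun n => min b ((⌈x * 2 ^ n⌉ : ℤ) / 2 ^ n) with ht
    have h1 : ∀ n, x ≤ t n := by
      intro n
      refine le_min hx.2 ?_
      rw [le_div_iff₀ (by positivity)]
      exact Int.le_ceil _
    have h2 : ∀ n, t n ≤ x + (1 / 2 : ℝ) ^ n := by
      intro n
      refine (min_le_right _ _).trans ?_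
      rw [div_le_iff₀ (by positivity)]
      have hle : (⌈x * 2 ^ n⌉ : ℝ) ≤ x * 2 ^ n + 1 := (Int.ceil_lt_add_one _).le
      have h2n : ((1 : ℝ) / 2) ^ n * 2 ^ n = 1 := by
        rw [← mul_pow]; norm_num
      nlinarith [h2n]
    have h3 : Tendsto t atTop (𝓝 x) := by
      have hup : Tendsto (fun n : ℕ => x + (1 / 2 : ℝ) ^ n) atTop (𝓝 (x + 0)) :=
        tendsto_const_nhds.add
          (tendsto_pow_atTop_nhds_zero_of_lt_one (by norm_num) (by norm_num))
      rw [add_zero] at hup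
      exact tendsto_of_tendsto_of_tendsto_of_le_of_le tendsto_const_nhds hup h1 h2
    have h5 : Tendsto t atTop (𝓝[Set.Icc x b] x) :=
      tendsto_nhdsWithin_of_tendsto_nhds_of_eventually_within _ h3
        (Eventually.of_forall fun n => ⟨h1 n, min_le_left _ _⟩)
    have hcont : Tendsto g (𝓝[Set.Icc x b] x) (𝓝 (g x)) := by
      rcases lt_or_eq_of_le hx.2 with hxb | hxb
      · rw [← Set.Ioc_insert_left hx.2]
        exact continuousWithinAt_insert_self.2 (hg_right x ⟨hx.1, hxb⟩)
      · subst hxb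
        rw [Set.Icc_self, nhdsWithin_singleton]
        exact tendsto_pure_nhds g x
    exact hcont.comp h5
  exact aemeasurable_of_tendsto_metrizable_ae' (fun n => (hmeas n).aemeasurable)
    ((ae_restrict_iff' measurableSet_Icc).2 (Eventually.of_forall hconv))

lemma g_integrableOn {C : ℝ}
    (hgm : AEMeasurable g (volume.restrict (Set.Icc a b)))
    (hC : ∀ x ∈ Set.Icc a b, |g x| ≤ C) :
    IntegrableOn g (Set.Icc a b) volume := by
  have hconst : IntegrableOn (fun _ : ℝ => C) (Set.Icc a b) volume := by
    refine integrableOn_const ?_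
    rw [Real.volume_Icc]; exact ENNReal.ofReal_ne_top
  refine Integrable.mono' hconst hgm.aestronglyMeasurable ?_
  exact (ae_restrict_iff' measurableSet_Icc).2
    (Eventually.of_forall fun x hx => by simpa [Real.norm_eq_abs] using hC x hx)

/-- The averaged integral converges to the left limit. -/
lemma avg_tendsto (hab : a < b) {C : ℝ}
    (hgm : AEMeasurable g (volume.restrict (Set.Icc a b)))
    (hC : ∀ x ∈ Set.Icc a b, |g x| ≤ C)
    (hg_left : ∀ s ∈ Set.Ioc a b, Tendsto g (𝓝[Set.Ioo a s] s) (𝓝 (gl s)))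
    {t : ℝ} (ht : t ∈ Set.Ioc a b) :
    Tendsto (fun ε : ℝ => (∫ s in Set.Ico (t - ε) t ∩ Set.Ioc a b, g s) / ε)
      (𝓝[>] 0) (𝓝 (gl t)) := by
  have hgint := g_integrableOn hgm hC
  rw [Metric.tendsto_nhdsWithin_nhds]
  intro δ hδ
  have hl := Metric.tendsto_nhdsWithin_nhds.1 (hg_left t ht) (δ / 2) (by linarith)
  obtain ⟨η, hη, hη'⟩ := hl
  refine ⟨min η (t - a), by simp [hη, ht.1, sub_pos], ?_⟩
  intro ε hε hεlt
  have hε0 : 0 < ε := hε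
  rw [Real.dist_eq, sub_zero, abs_of_pos hε0] at hεlt
  have hεη : ε < η := lt_of_lt_of_le hεlt (min_le_left _ _)
  have hεa : ε < t - a := lt_of_lt_of_le hεlt (min_le_right _ _)
  -- the intersection is just `Ico (t-ε) t`
  have hset : Set.Ico (t - ε) t ∩ Set.Ioc a b = Set.Ico (t - ε) t := by
    refine Set.inter_eq_left.2 fun s hs => ?_
    exact ⟨by linarith [hs.1], le_trans hs.2.le ht.2⟩
  rw [hset]
  -- pointwise bound on the interval
  have hbd : ∀ s ∈ Set.Ico (t - ε) t, |g s - gl t| ≤ δ / 2 := by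
    intro s hs
    have hsmem : s ∈ Set.Ioo a t := ⟨by linarith [hs.1], hs.2⟩
    have hdist : dist s t < η := by
      rw [Real.dist_eq, abs_of_nonpos (by linarith [hs.2])]
      linarith [hs.1]
    have h := hη' hsmem hdist
    rw [Real.dist_eq] at h
    exact h.le
  have hint : IntegrableOn g (Set.Ico (t - ε) t) volume := by
    refine hgint.mono_set fun s hs => ?_
    exact ⟨by linarith [hs.1, ht.1], le_trans hs.2.le ht.2⟩
  have hvol : (volume (Set.Ico (t - ε) t)).toReal = ε := by
    rw [Real.volume_Ico]
    simp [ENNReal.toReal_ofReal hε0.le]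
  have hconst : ∫ s in Set.Ico (t - ε) t, gl t ∂volume = ε * gl t := by
    rw [setIntegral_const, measureReal_def, hvol, smul_eq_mul]
  have hconst_int : IntegrableOn (fun _ : ℝ => gl t) (Set.Ico (t - ε) t) volume :=
    integrableOn_const (by rw [Real.volume_Ico]; exact ENNReal.ofReal_ne_top)
  have hsub : ∫ s in Set.Ico (t - ε) t, (g s - gl t) ∂volume
      = (∫ s in Set.Ico (t - ε) t, g s) - ε * gl t := by
    rw [integral_sub hint hconst_int, hconst]
  have hbound : ‖∫ s in Set.Ico (t - ε) t, (g s - gl t) ∂volume‖ ≤ δ / 2 * ε := by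
    have := norm_setIntegral_le_of_norm_le_const (μ := volume)
      (s := Set.Ico (t - ε) t) (C := δ / 2) (f := fun s => g s - gl t)
      (by rw [Real.volume_Ico]; exact ENNReal.ofReal_lt_top)
      (fun s hs => by simpa [Real.norm_eq_abs] using hbd s hs)
    calc ‖∫ s in Set.Ico (t - ε) t, (g s - gl t) ∂volume‖
        ≤ δ / 2 * (volume (Set.Ico (t - ε) t)).toReal := this
      _ = δ / 2 * ε := by rw [hvol]
  rw [Real.dist_eq]
  have : (∫ s in Set.Ico (t - ε) t, g s) / ε - gl t
      = (∫ s in Set.Ico (t - ε) t, (g s - gl t) ∂volume) / ε := by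
    rw [hsub]; field_simp
  rw [this, abs_div, abs_of_pos hε0]
  rw [Real.norm_eq_abs] at hbound
  calc |∫ s in Set.Ico (t - ε) t, (g s - gl t) ∂volume| / ε ≤ δ / 2 * ε / ε := by
        gcongr
      _ = δ / 2 := by field_simp
      _ < δ := by linarith

lemma meas_toReal_Ioc (μ : Measure ℝ) [IsFiniteMeasure μ] {ε : ℝ} (hε : 0 ≤ ε) :
    Measurable fun s : ℝ => (μ (Set.Ioc s (s + ε))).toReal := by
  have hfun : ∀ s : ℝ, (μ (Set.Ioc s (s + ε))).toReal
      = (μ (Set.Iic (s + ε))).toReal - (μ (Set.Iic s)).toReal := by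
    intro s
    have hsub : Set.Iic s ⊆ Set.Iic (s + ε) := Set.Iic_subset_Iic.2 (by linarith)
    rw [show Set.Ioc s (s + ε) = Set.Iic (s + ε) \ Set.Iic s by
      ext y; simp only [Set.mem_Ioc, Set.mem_diff, Set.mem_Iic, not_le]; tauto, measure_diff hsub measurableSet_Iic.nullMeasurableSet
      (measure_ne_top μ _), ENNReal.toReal_sub_of_le (measure_mono hsub) (measure_ne_top μ _)]
  have m1 : Monotone fun s : ℝ => (μ (Set.Iic (s + ε))).toReal := fun x y hxy =>
    ENNReal.toReal_mono (measure_ne_top μ _) (measure_mono (Set.Iic_subset_Iic.2 (by linarith)))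
  have m2 : Monotone fun s : ℝ => (μ (Set.Iic s)).toReal := fun x y hxy =>
    ENNReal.toReal_mono (measure_ne_top μ _) (measure_mono (Set.Iic_subset_Iic.2 hxy))
  have : (fun s : ℝ => (μ (Set.Ioc s (s + ε))).toReal)
      = fun s : ℝ => (μ (Set.Iic (s + ε))).toReal - (μ (Set.Iic s)).toReal := funext hfun
  rw [this]
  exact m1.measurable.sub m2.measurable

lemma avg_bound {C : ℝ} (hC0 : 0 ≤ C)
    (hC : ∀ x ∈ Set.Icc a b, |g x| ≤ C) {ε : ℝ} (hε : 0 < ε) (t : ℝ) :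
    |(∫ s in Set.Ico (t - ε) t ∩ Set.Ioc a b, g s) / ε| ≤ C := by
  have hSm : MeasurableSet (Set.Ico (t - ε) t ∩ Set.Ioc a b) :=
    measurableSet_Ico.inter measurableSet_Ioc
  have hfin : volume (Set.Ico (t - ε) t ∩ Set.Ioc a b) < ⊤ :=
    lt_of_le_of_lt (measure_mono Set.inter_subset_left)
      (by rw [Real.volume_Ico]; exact ENNReal.ofReal_lt_top)
  have h1 := norm_setIntegral_le_of_norm_le_const (μ := volume) (C := C) (f := g) hfin
      (fun s hs => by simpa [Real.norm_eq_abs] using hC s (Set.Ioc_subset_Icc_self hs.2))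
  have h2 : (volume (Set.Ico (t - ε) t ∩ Set.Ioc a b)).toReal ≤ ε := by
    have hmono : volume (Set.Ico (t - ε) t ∩ Set.Ioc a b) ≤ volume (Set.Ico (t - ε) t) :=
      measure_mono Set.inter_subset_left
    rw [Real.volume_Ico] at hmono
    calc (volume (Set.Ico (t - ε) t ∩ Set.Ioc a b)).toReal
        ≤ (ENNReal.ofReal (t - (t - ε))).toReal := ENNReal.toReal_mono ENNReal.ofReal_ne_top hmono
      _ = ε := by rw [ENNReal.toReal_ofReal (by linarith)]; ring
  rw [abs_div, abs_of_pos hε, div_le_iff₀ hε]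
  rw [Real.norm_eq_abs] at h1
  calc |∫ s in Set.Ico (t - ε) t ∩ Set.Ioc a b, g s|
      ≤ C * (volume (Set.Ico (t - ε) t ∩ Set.Ioc a b)).toReal := h1
    _ ≤ C * ε := mul_le_mul_of_nonneg_left h2 hC0

lemma inner_aesm (ρ : Measure ℝ) [SFinite ρ]
    (hgm : AEMeasurable g (volume.restrict (Set.Icc a b))) (ε : ℝ) :
    AEStronglyMeasurable (fun t : ℝ => ∫ s in Set.Ico (t - ε) t ∩ Set.Ioc a b, g s) ρ := by
  set ν := volume.restrict (Set.Ioc a b) with hν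
  haveI : IsFiniteMeasure ν := ⟨by
    rw [hν, Measure.restrict_apply_univ, Real.volume_Ioc]; exact ENNReal.ofReal_lt_top⟩
  have hgν : AEStronglyMeasurable g ν :=
    (hgm.mono_measure (Measure.restrict_mono Set.Ioc_subset_Icc_self le_rfl)).aestronglyMeasurable
  have hD : MeasurableSet {p : ℝ × ℝ | p.1 - ε ≤ p.2 ∧ p.2 < p.1} :=
    (measurableSet_le (measurable_fst.sub measurable_const) measurable_snd).inter
      (measurableSet_lt measurable_snd measurable_fst)
  have hΦ : AEStronglyMeasurable
      (fun p : ℝ × ℝ => Set.indicator {p : ℝ × ℝ | p.1 - ε ≤ p.2 ∧ p.2 < p.1}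
        (fun q => g q.2) p) (ρ.prod ν) := (hgν.comp_snd).indicator hD
  have h1 := hΦ.integral_prod_right'
  refine h1.congr (Eventually.of_forall fun t => ?_)
  have heq : (fun s => Set.indicator {p : ℝ × ℝ | p.1 - ε ≤ p.2 ∧ p.2 < p.1}
      (fun q => g q.2) (t, s)) = Set.indicator (Set.Ico (t - ε) t) g := by
    funext s
    by_cases h : s ∈ Set.Ico (t - ε) t
    · rw [Set.indicator_of_mem h, Set.indicator_of_mem (by exact ⟨h.1, h.2⟩)]
    · rw [Set.indicator_of_notMem h, Set.indicator_of_notMem (fun hc => h ⟨hc.1, hc.2⟩)]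
  show (∫ s, _ ∂ν) = _
  rw [heq, integral_indicator measurableSet_Ico, hν,
    Measure.restrict_restrict measurableSet_Ico]

lemma fubini_step {C : ℝ} (hC0 : 0 ≤ C) (μ : Measure ℝ) [IsFiniteMeasure μ]
    (hgm : AEMeasurable g (volume.restrict (Set.Icc a b)))
    (hC : ∀ x ∈ Set.Icc a b, |g x| ≤ C) {ε : ℝ} (hε : 0 < ε) :
    ∫ s in Set.Ioc a b, g s * (μ (Set.Ioc s (s + ε))).toReal
      = ∫ t, (∫ s in Set.Ico (t - ε) t ∩ Set.Ioc a b, g s) ∂μ := by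
  set ν := volume.restrict (Set.Ioc a b) with hν
  haveI : IsFiniteMeasure ν := ⟨by
    rw [hν, Measure.restrict_apply_univ, Real.volume_Ioc]; exact ENNReal.ofReal_lt_top⟩
  have hgν : AEStronglyMeasurable g ν :=
    (hgm.mono_measure (Measure.restrict_mono Set.Ioc_subset_Icc_self le_rfl)).aestronglyMeasurable
  set D : Set (ℝ × ℝ) := {p : ℝ × ℝ | p.1 < p.2 ∧ p.2 ≤ p.1 + ε} with hD
  have hDm : MeasurableSet D := (measurableSet_lt measurable_fst measurable_snd).inter
      (measurableSet_le measurable_snd (measurable_fst.add measurable_const))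
  set Φ : ℝ × ℝ → ℝ := fun p => g p.1 * Set.indicator D (fun _ => (1 : ℝ)) p with hΦ
  have hΦm : AEStronglyMeasurable Φ (ν.prod μ) :=
    hgν.comp_fst.mul ((measurable_const.indicator hDm).aestronglyMeasurable)
  have hΦi : Integrable Φ (ν.prod μ) := by
    have hae : ∀ᵐ s ∂ν, ‖g s‖ ≤ C := (ae_restrict_iff' measurableSet_Ioc).2
      (Eventually.of_forall fun s hs => by
        simpa [Real.norm_eq_abs] using hC s (Set.Ioc_subset_Icc_self hs))
    have haeP : ∀ᵐ p : ℝ × ℝ ∂ν.prod μ, ‖g p.1‖ ≤ C :=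
      MeasureTheory.Measure.quasiMeasurePreserving_fst.ae hae
    refine Integrable.mono' (integrable_const C) hΦm ?_
    refine haeP.mono fun p hp => ?_
    have hind : |Set.indicator D (fun _ => (1 : ℝ)) p| ≤ 1 := by
      by_cases h : p ∈ D <;>
        simp [Set.indicator_of_mem, Set.indicator_of_notMem, h]
    rw [Real.norm_eq_abs] at hp ⊢
    calc |Φ p| = |g p.1| * |Set.indicator D (fun _ => (1 : ℝ)) p| := by
          rw [hΦ]; exact abs_mul _ _
      _ ≤ C * 1 := mul_le_mul hp hind (abs_nonneg _) hC0
      _ = C := mul_one C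
  calc ∫ s in Set.Ioc a b, g s * (μ (Set.Ioc s (s + ε))).toReal
      = ∫ s, (∫ t, Φ (s, t) ∂μ) ∂ν := by
        apply integral_congr_ae
        filter_upwards with s
        have heq : (fun t => Set.indicator D (fun _ => (1 : ℝ)) (s, t))
            = Set.indicator (Set.Ioc s (s + ε)) (fun _ => (1 : ℝ)) := by
          funext t
          by_cases h : t ∈ Set.Ioc s (s + ε)
          · rw [Set.indicator_of_mem h, Set.indicator_of_mem (by exact ⟨h.1, h.2⟩)]
          · rw [Set.indicator_of_notMem h, Set.indicator_of_notMem (fun hc => h ⟨hc.1, hc.2⟩)]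
        have : ∫ t, Φ (s, t) ∂μ = g s * (μ (Set.Ioc s (s + ε))).toReal := by
          simp only [hΦ]
          rw [integral_const_mul, heq, integral_indicator_const (1 : ℝ) measurableSet_Ioc]
          rw [smul_eq_mul, mul_one, measureReal_def]
        rw [this]
      _ = ∫ t, (∫ s, Φ (s, t) ∂ν) ∂μ := integral_integral_swap hΦi
      _ = ∫ t, (∫ s in Set.Ico (t - ε) t ∩ Set.Ioc a b, g s) ∂μ := by
        apply integral_congr_ae
        filter_upwards with t
        have heq : (fun s => Φ (s, t)) = Set.indicator (Set.Ico (t - ε) t) g := by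
          funext s
          by_cases h : s ∈ Set.Ico (t - ε) t
          · have hD' : (s, t) ∈ D := ⟨h.2, by linarith [h.1]⟩
            rw [hΦ]
            simp only [Set.indicator_of_mem hD', Set.indicator_of_mem h, mul_one]
          · have hD' : (s, t) ∉ D := fun hc => h ⟨by linarith [hc.2], hc.1⟩
            rw [hΦ]
            simp only [Set.indicator_of_notMem hD', Set.indicator_of_notMem h, mul_zero]
        rw [heq, integral_indicator measurableSet_Ico, hν,
          Measure.restrict_restrict measurableSet_Ico]

lemma extend_diff_eq {f : ℝ → ℝ} {F₁ F₂ : StieltjesFunction ℝ}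
    (hf : ∀ x ∈ Set.Icc a b, f x = F₁ x - F₂ x)
    {s ε : ℝ} (hs : s ∈ Set.Ioc a b) (hε : 0 < ε) :
    extendJbar a b f (s + ε) - extendJbar a b f s =
      ((F₁.measure.restrict (Set.Ioc a b)) (Set.Ioc s (s + ε))).toReal -
        ((F₂.measure.restrict (Set.Ioc a b)) (Set.Ioc s (s + ε))).toReal := by
  set m := min b (s + ε) with hm
  have hsm : s ≤ m := le_min hs.2 (by linarith)
  have hinter : Set.Ioc s (s + ε) ∩ Set.Ioc a b = Set.Ioc s m := by
    ext y
    simp only [Set.mem_inter_iff, Set.mem_Ioc, hm, le_min_iff]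
    constructor
    · rintro ⟨⟨h1, h2⟩, h3, h4⟩; exact ⟨h1, h4, h2⟩
    · rintro ⟨h1, h2, h3⟩; exact ⟨⟨h1, h3⟩, lt_trans hs.1 h1, h2⟩
  have key : ∀ F : StieltjesFunction ℝ,
      ((F.measure.restrict (Set.Ioc a b)) (Set.Ioc s (s + ε))).toReal = F m - F s := by
    intro F
    rw [Measure.restrict_apply measurableSet_Ioc, hinter, StieltjesFunction.measure_Ioc,
      ENNReal.toReal_ofReal (by linarith [F.mono hsm] : (0 : ℝ) ≤ F m - F s)]
  rw [key F₁, key F₂]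
  have hv1 : extendJbar a b f s = f s := by
    simp only [extendJbar]
    rw [if_neg (not_lt.2 hs.1.le), if_pos hs.2]
  have hv2 : extendJbar a b f (s + ε) = f m := by
    simp only [extendJbar]
    rcases le_or_gt (s + ε) b with h | h
    · rw [if_neg (not_lt.2 (by linarith [hs.1] : a ≤ s + ε)), if_pos h, hm, min_eq_right h]
    · rw [if_neg (not_lt.2 (by linarith [hs.1] : a ≤ s + ε)), if_neg (not_le.2 h), hm,
        min_eq_left h.le]
  have hmb : m ∈ Set.Icc a b := ⟨le_trans hs.1.le hsm, min_le_left _ _⟩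
  rw [hv1, hv2, hf m hmb, hf s ⟨hs.1.le, hs.2⟩]
  ring

set_option maxHeartbeats 800000 in
lemma mul_meas_integrableOn {C : ℝ} (μ : Measure ℝ) [IsFiniteMeasure μ]
    (hgm : AEMeasurable g (volume.restrict (Set.Icc a b)))
    (hC : ∀ x ∈ Set.Icc a b, |g x| ≤ C) (hC0 : 0 ≤ C) {ε : ℝ} (hε : 0 < ε) :
    IntegrableOn (fun s => g s * (μ (Set.Ioc s (s + ε))).toReal / ε) (Set.Ioc a b) volume := by
  have hgν : AEStronglyMeasurable g (volume.restrict (Set.Ioc a b)) :=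
    (hgm.mono_measure (Measure.restrict_mono Set.Ioc_subset_Icc_self le_rfl)).aestronglyMeasurable
  have hm := meas_toReal_Ioc μ hε.le
  have h0 : AEStronglyMeasurable (fun s : ℝ => (μ (Set.Ioc s (s + ε))).toReal)
      (volume.restrict (Set.Ioc a b)) := hm.aestronglyMeasurable
  have h1 : AEStronglyMeasurable (fun s => g s * (μ (Set.Ioc s (s + ε))).toReal)
      (volume.restrict (Set.Ioc a b)) := hgν.mul h0
  have haesm : AEStronglyMeasurable (fun s => g s * (μ (Set.Ioc s (s + ε))).toReal / ε)
      (volume.restrict (Set.Ioc a b)) := by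
    simpa only [div_eq_mul_inv] using h1.mul_const ε⁻¹
  have hconst : IntegrableOn (fun _ : ℝ => C * (μ Set.univ).toReal / ε) (Set.Ioc a b) volume :=
    integrableOn_const (by rw [Real.volume_Ioc]; exact ENNReal.ofReal_ne_top)
  refine Integrable.mono' hconst haesm ?_
  refine (ae_restrict_iff' measurableSet_Ioc).2 (Eventually.of_forall fun s hs => ?_)
  rw [Real.norm_eq_abs, abs_div, abs_of_pos hε]
  have h1 : |g s * (μ (Set.Ioc s (s + ε))).toReal| ≤ C * (μ Set.univ).toReal := by
    rw [abs_mul]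
    refine mul_le_mul (hC s (Set.Ioc_subset_Icc_self hs)) ?_ (abs_nonneg _) hC0
    rw [abs_of_nonneg ENNReal.toReal_nonneg]
    exact ENNReal.toReal_mono (measure_ne_top μ _) (measure_mono (Set.subset_univ _))
  gcongr

end ForwardIntegralAux

open ForwardIntegralAux in
/-- **Forward integral against a càdlàg bounded variation function.** -/
theorem forward_integral_eq_stieltjes
    (a b : ℝ) (hab : a < b) (f g gl : ℝ → ℝ)
    (F₁ F₂ : StieltjesFunction ℝ)
    (hf : ∀ x ∈ Set.Icc a b, f x = F₁ x - F₂ x)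
    (hg_right : ∀ s ∈ Set.Ico a b, Tendsto g (𝓝[Set.Ioc s b] s) (𝓝 (g s)))
    (hg_left : ∀ s ∈ Set.Ioc a b, Tendsto g (𝓝[Set.Ioo a s] s) (𝓝 (gl s))) :
    Tendsto (fun ε : ℝ =>
        ∫ s in a..b, g s * (extendJbar a b f (s + ε) - extendJbar a b f s) / ε)
      (𝓝[>] 0)
      (𝓝 ((∫ s in Set.Ioc a b, gl s ∂F₁.measure)
            - ∫ s in Set.Ioc a b, gl s ∂F₂.measure)) := by
  obtain ⟨C, hC0, hC⟩ := cadlag_bounded hab hg_right hg_left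
  have hgm := cadlag_aemeasurable hg_right
  set μ₁ := F₁.measure.restrict (Set.Ioc a b) with hμ₁
  set μ₂ := F₂.measure.restrict (Set.Ioc a b) with hμ₂
  have hfin1 : IsFiniteMeasure μ₁ := ⟨by
    rw [hμ₁, Measure.restrict_apply_univ, StieltjesFunction.measure_Ioc]
    exact ENNReal.ofReal_lt_top⟩
  have hfin2 : IsFiniteMeasure μ₂ := ⟨by
    rw [hμ₂, Measure.restrict_apply_univ, StieltjesFunction.measure_Ioc]
    exact ENNReal.ofReal_lt_top⟩
  have key : ∀ (ρ : Measure ℝ), IsFiniteMeasure ρ → (∀ᵐ t ∂ρ, t ∈ Set.Ioc a b) →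
      Tendsto (fun ε : ℝ => ∫ t, (∫ s in Set.Ico (t - ε) t ∩ Set.Ioc a b, g s) / ε ∂ρ)
        (𝓝[>] 0) (𝓝 (∫ t, gl t ∂ρ)) := by
    intro ρ hρfin hρ
    haveI := hρfin
    refine tendsto_integral_filter_of_dominated_convergence (fun _ => C) ?_ ?_
      (integrable_const C) ?_
    · filter_upwards [self_mem_nhdsWithin] with ε (hε : ε ∈ Set.Ioi (0 : ℝ))
      have h := (inner_aesm (a := a) (b := b) ρ hgm ε).mul_const ε⁻¹
      simpa only [div_eq_mul_inv] using h
    · filter_upwards [self_mem_nhdsWithin] with ε (hε : ε ∈ Set.Ioi (0 : ℝ))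
      exact Eventually.of_forall fun t => by
        rw [Real.norm_eq_abs]
        exact avg_bound hC0 hC (hε : (0 : ℝ) < ε) t
    · filter_upwards [hρ] with t ht
      exact avg_tendsto hab hgm hC hg_left ht
  have h1 := key μ₁ hfin1 (ae_restrict_mem measurableSet_Ioc)
  have h2 := key μ₂ hfin2 (ae_restrict_mem measurableSet_Ioc)
  refine Filter.Tendsto.congr' ?_ (h1.sub h2)
  filter_upwards [self_mem_nhdsWithin] with ε (hε : ε ∈ Set.Ioi (0 : ℝ))
  have hε0 : (0 : ℝ) < ε := hε
  haveI := hfin1; haveI := hfin2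
  have hint1 := mul_meas_integrableOn μ₁ hgm hC hC0 hε0
  have hint2 := mul_meas_integrableOn μ₂ hgm hC hC0 hε0
  have hstep : ∀ (μ : Measure ℝ) (_ : IsFiniteMeasure μ),
      (∫ s in Set.Ioc a b, g s * (μ (Set.Ioc s (s + ε))).toReal / ε)
        = ∫ t, (∫ s in Set.Ico (t - ε) t ∩ Set.Ioc a b, g s) / ε ∂μ := by
    intro μ hμ
    haveI := hμ
    rw [integral_div, fubini_step hC0 μ hgm hC hε0, ← integral_div]
  have hcongr : Set.EqOn
      (fun s => g s * (extendJbar a b f (s + ε) - extendJbar a b f s) / ε)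
      (fun s => g s * (μ₁ (Set.Ioc s (s + ε))).toReal / ε
        - g s * (μ₂ (Set.Ioc s (s + ε))).toReal / ε) (Set.Ioc a b) := by
    intro s hs
    simp only
    rw [extend_diff_eq hf hs hε0, hμ₁, hμ₂]
    ring
  calc ∫ t, (∫ s in Set.Ico (t - ε) t ∩ Set.Ioc a b, g s) / ε ∂μ₁
        - ∫ t, (∫ s in Set.Ico (t - ε) t ∩ Set.Ioc a b, g s) / ε ∂μ₂
      = (∫ s in Set.Ioc a b, g s * (μ₁ (Set.Ioc s (s + ε))).toReal / ε)
          - ∫ s in Set.Ioc a b, g s * (μ₂ (Set.Ioc s (s + ε))).toReal / ε := by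
        rw [hstep μ₁ hfin1, hstep μ₂ hfin2]
    _ = ∫ s in Set.Ioc a b, (g s * (μ₁ (Set.Ioc s (s + ε))).toReal / ε
          - g s * (μ₂ (Set.Ioc s (s + ε))).toReal / ε) := (integral_sub hint1 hint2).symm
    _ = ∫ s in Set.Ioc a b, g s * (extendJbar a b f (s + ε) - extendJbar a b f s) / ε :=
        (setIntegral_congr_fun measurableSet_Ioc hcongr).symm
    _ = ∫ s in a..b, g s * (extendJbar a b f (s + ε) - extendJbar a b f s) / ε :=
        (intervalIntegral.integral_of_le hab.le).symm
end
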